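/- For a quasimetric J on X, define σ_n(J) as the smallest constant σ_n ≥ 1 such that J(x₁,x_{n+1}) ≤ σ_n Σ_{i=1}^n J(x_i,x_{i+1}) for all chains of n+1 points. Then for all natural numbers n, m: σ_{nm}(J) ≤ σ_n(J)·σ_m(J). -/

import Mathlib

/-- `chainConst J n` is the smallest constant `σ_n ≥ 1` such that
`J (x 0) (x n) ≤ σ_n * ∑_{i<n} J (x i) (x (i+1))` for all chains of `n+1` points. -/
noncomputable def chainConst {X : Type*} (J : X → X → ℝ) (n : ℕ) : ℝ :=
  sInf {σ : ℝ | 1 ≤ σ ∧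
    ∀ x : ℕ → X, J (x 0) (x n) ≤ σ * ∑ i ∈ Finset.range n, J (x i) (x (i + 1))}

/-- For a quasimetric `J` on `X`, `σ_{nm}(J) ≤ σ_n(J) · σ_m(J)`. -/
theorem stmt_1 {X : Type*} [Nonempty X] (J : X → X → ℝ) (σ : ℝ)
    (hnonneg : ∀ x y, 0 ≤ J x y)
    (hiff : ∀ x y, J x y = 0 ↔ x = y)
    (hsymm : ∀ x y, J x y = J y x)
    (hσ : 1 ≤ σ)
    (htri : ∀ x y z, J x y ≤ σ * (J x z + J z y))
    (n m : ℕ) :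
    chainConst J (n * m) ≤ chainConst J n * chainConst J m := by
  have hJself : ∀ x : X, J x x = 0 := fun x => (hiff x x).2 rfl
  set S : ℕ → Set ℝ := fun k => {σ' : ℝ | 1 ≤ σ' ∧
    ∀ x : ℕ → X, J (x 0) (x k) ≤ σ' * ∑ i ∈ Finset.range k, J (x i) (x (i + 1))} with hSdef
  have hCC : ∀ k, chainConst J k = sInf (S k) := fun k => rfl
  -- σ^k belongs to S k
  have hprop : ∀ k (x : ℕ → X),
      J (x 0) (x k) ≤ σ ^ k * ∑ i ∈ Finset.range k, J (x i) (x (i + 1)) := by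
    intro k
    induction k with
    | zero => intro x; simp [hJself]
    | succ k ih =>
      intro x
      have h1 := htri (x 0) (x (k + 1)) (x k)
      have h2 := ih x
      have hs : 0 ≤ ∑ i ∈ Finset.range k, J (x i) (x (i + 1)) :=
        Finset.sum_nonneg fun i _ => hnonneg _ _
      have hpk : (1 : ℝ) ≤ σ ^ k := one_le_pow₀ hσ
      have hlast : 0 ≤ J (x k) (x (k + 1)) := hnonneg _ _
      rw [Finset.sum_range_succ, pow_succ]
      have hσ0 : (0:ℝ) ≤ σ := by linarith
      nlinarith [mul_le_mul_of_nonneg_left h2 hσ0,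
        mul_nonneg (mul_nonneg hσ0 hlast) (sub_nonneg.2 hpk)]
  have hmem : ∀ k, σ ^ k ∈ S k := fun k => ⟨one_le_pow₀ hσ, hprop k⟩
  have hne : ∀ k, (S k).Nonempty := fun k => ⟨σ ^ k, hmem k⟩
  have hbdd : ∀ k, BddBelow (S k) := fun k => ⟨1, fun a ha => ha.1⟩
  have hone : ∀ k, 1 ≤ chainConst J k := fun k => le_csInf (hne k) fun a ha => ha.1
  -- the infimum itself satisfies the chain inequality
  have hsat : ∀ k (x : ℕ → X),
      J (x 0) (x k) ≤ chainConst J k * ∑ i ∈ Finset.range k, J (x i) (x (i + 1)) := by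
    intro k x
    set s := ∑ i ∈ Finset.range k, J (x i) (x (i + 1)) with hsdef
    have hs : 0 ≤ s := Finset.sum_nonneg fun i _ => hnonneg _ _
    refine le_of_forall_pos_le_add ?_
    intro ε hε
    have hδ : 0 < ε / (s + 1) := div_pos hε (by linarith)
    obtain ⟨σ', hσ'S, hσ'lt⟩ := exists_lt_of_csInf_lt (hne k)
      (lt_add_of_pos_right (sInf (S k)) hδ)
    have h1 : J (x 0) (x k) ≤ σ' * s := hσ'S.2 x
    have h2 : σ' * s ≤ (chainConst J k + ε / (s + 1)) * s := by
      apply mul_le_mul_of_nonneg_right _ hs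
      exact le_of_lt hσ'lt
    have h3 : (ε / (s + 1)) * s ≤ ε := by
      rw [div_mul_eq_mul_div, div_le_iff₀ (by linarith)]
      nlinarith
    nlinarith
  -- splitting sums into blocks
  have hsum : ∀ (f : ℕ → ℝ) (M : ℕ), ∑ k ∈ Finset.range (M * n), f k
      = ∑ j ∈ Finset.range M, ∑ i ∈ Finset.range n, f (j * n + i) := by
    intro f M
    induction M with
    | zero => simp
    | succ M ih =>
      rw [Finset.sum_range_succ, ← ih, Nat.succ_mul, Finset.sum_range_add]
  -- chainConst J n * chainConst J m ∈ S (n*m)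
  have hkey : chainConst J n * chainConst J m ∈ S (n * m) := by
    have hA := hone n
    have hB := hone m
    refine ⟨by nlinarith, ?_⟩
    intro x
    have h1 := hsat m (fun j => x (j * n))
    simp only [zero_mul] at h1
    have h2 : ∀ j, J (x (j * n)) (x ((j + 1) * n)) ≤
        chainConst J n * ∑ i ∈ Finset.range n, J (x (j * n + i)) (x (j * n + i + 1)) := by
      intro j
      have h := hsat n (fun i => x (j * n + i))
      simp only [Nat.add_zero, ← Nat.add_assoc] at h
      rwa [Nat.succ_mul]
    have h3 : ∑ j ∈ Finset.range m, J (x (j * n)) (x ((j + 1) * n)) ≤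
        chainConst J n * ∑ j ∈ Finset.range m,
          ∑ i ∈ Finset.range n, J (x (j * n + i)) (x (j * n + i + 1)) := by
      rw [Finset.mul_sum]
      exact Finset.sum_le_sum fun j _ => h2 j
    have hs2 : 0 ≤ ∑ j ∈ Finset.range m, J (x (j * n)) (x ((j + 1) * n)) :=
      Finset.sum_nonneg fun i _ => hnonneg _ _
    have hrw : ∑ k ∈ Finset.range (n * m), J (x k) (x (k + 1))
        = ∑ j ∈ Finset.range m, ∑ i ∈ Finset.range n, J (x (j * n + i)) (x (j * n + i + 1)) := by
      rw [mul_comm n m]; exact hsum _ m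
    have hmn : x (n * m) = x (m * n) := by rw [mul_comm]
    calc J (x 0) (x (n * m)) = J (x 0) (x (m * n)) := by rw [hmn]
      _ ≤ chainConst J m * ∑ j ∈ Finset.range m, J (x (j * n)) (x ((j + 1) * n)) := h1
      _ ≤ chainConst J m * (chainConst J n * ∑ j ∈ Finset.range m,
            ∑ i ∈ Finset.range n, J (x (j * n + i)) (x (j * n + i + 1))) := by
          exact mul_le_mul_of_nonneg_left h3 (by linarith)
      _ = chainConst J n * chainConst J m * ∑ k ∈ Finset.range (n * m), J (x k) (x (k + 1)) := by
          rw [hrw]; ring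
  exact csInf_le (hbdd _) hkey
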